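/- Let $m \geq 2$ and consider group masses $S_1 = \dots = S_{m-1} = m + 1$ and $S_m = m$ for the sorted-insertion grouping, versus masses $S'_1 = m^2$ and $S'_2 = \dots = S'_m = 1$ for the alternative grouping (all on the same Hamiltonian with $\|c\|_2^2 = m^2 + m - 1$). Then $\frac{(\sum_{j=1}^m \sqrt{S_j})^2}{(\sum_{j=1}^m \sqrt{S'_j})^2} \geq \frac{m^3}{(2m - 1)^2} \geq \frac{m}{4}$. -/
import Mathlib

/-- Maximal-separation construction: with sorted-insertion group masses
`m+1` (for `m-1` groups) and `m` (one group) versus alternative masses `m²`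
(one group) and `1` (for `m-1` groups), the ratio of minimized variances is at
least `m³/(2m-1)² ≥ m/4`. -/
theorem maximal_separation_ratio (m : ℕ) (hm : 2 ≤ m) :
    (((m : ℝ) - 1) * Real.sqrt ((m : ℝ) + 1) + Real.sqrt (m : ℝ)) ^ 2
        / (Real.sqrt ((m : ℝ) ^ 2) + ((m : ℝ) - 1) * Real.sqrt 1) ^ 2
      ≥ (m : ℝ) ^ 3 / (2 * (m : ℝ) - 1) ^ 2 ∧
    (m : ℝ) ^ 3 / (2 * (m : ℝ) - 1) ^ 2 ≥ (m : ℝ) / 4 := by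
  have hr : (2 : ℝ) ≤ (m : ℝ) := by exact_mod_cast hm
  have hr0 : (0 : ℝ) ≤ (m : ℝ) := by linarith
  have hden : (Real.sqrt ((m : ℝ) ^ 2) + ((m : ℝ) - 1) * Real.sqrt 1) ^ 2
      = (2 * (m : ℝ) - 1) ^ 2 := by
    rw [Real.sqrt_sq hr0, Real.sqrt_one]; ring
  constructor
  · rw [hden, ge_iff_le]
    have hpos : (0 : ℝ) < (2 * (m : ℝ) - 1) ^ 2 := by nlinarith
    gcongr
    have h1 : Real.sqrt (m : ℝ) ≤ Real.sqrt ((m : ℝ) + 1) :=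
      Real.sqrt_le_sqrt (by linarith)
    have h2 : (m : ℝ) * Real.sqrt (m : ℝ)
        ≤ ((m : ℝ) - 1) * Real.sqrt ((m : ℝ) + 1) + Real.sqrt (m : ℝ) := by
      have := mul_le_mul_of_nonneg_left h1 (by linarith : (0:ℝ) ≤ (m:ℝ) - 1)
      nlinarith [Real.sqrt_nonneg ((m : ℝ))]
    have h3 : ((m : ℝ) * Real.sqrt (m : ℝ)) ^ 2 = (m : ℝ) ^ 3 := by
      rw [mul_pow, Real.sq_sqrt hr0]; ring
    calc (m : ℝ) ^ 3 = ((m : ℝ) * Real.sqrt (m : ℝ)) ^ 2 := h3.symm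
      _ ≤ (((m : ℝ) - 1) * Real.sqrt ((m : ℝ) + 1) + Real.sqrt (m : ℝ)) ^ 2 := by
          apply pow_le_pow_left₀ (by positivity) h2
  · rw [ge_iff_le, div_le_div_iff₀ (by norm_num) (by nlinarith)]
    nlinarith
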